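/- arXiv:2101.12123 — 3 statements merged into one kernel-verified Lean document; each statement's English description precedes it below -/
import Mathlib

section
/- For all n : ℕ and all 0-indexed positions p < q < 2^n - 1, if the letters of BSP(n) at positions p and q are both equal to some i, then there exists a position r with p < r < q such that the letter of BSP(n) at position r is strictly greater than i. -/
def BSP : ℕ → List ℕ
  | 0 => []
  | n+1 => BSP n ++ [n+1] ++ BSP n

lemma BSP_length (n : ℕ) : (BSP n).length = 2 ^ n - 1 := by
  induction n with
  | zero => simp [BSP]
  | succ n ih =>
    have h1 : 1 ≤ 2 ^ n := Nat.one_le_two_pow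
    simp [BSP, ih, pow_succ]
    omega

lemma BSP_le (n : ℕ) : ∀ x ∈ BSP n, x ≤ n := by
  induction n with
  | zero => simp [BSP]
  | succ n ih =>
    intro x hx
    rw [show BSP (n+1) = BSP n ++ [n+1] ++ BSP n from rfl] at hx
    simp only [List.mem_append, List.mem_singleton] at hx
    rcases hx with (hx | rfl) | hx
    · exact le_trans (ih x hx) (Nat.le_succ n)
    · exact le_refl _
    · exact le_trans (ih x hx) (Nat.le_succ n)

lemma BSP_getD_eq (n k : ℕ) (hk : k < (BSP n).length) :
    (BSP n).getD k 0 = (BSP n)[k] := List.getD_eq_getElem _ _ hk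

theorem bsp_separation (n p q i : ℕ) (hpq : p < q) (hq : q < 2 ^ n - 1)
    (hp' : (BSP n).getD p 0 = i) (hq' : (BSP n).getD q 0 = i) :
    ∃ r, p < r ∧ r < q ∧ i < (BSP n).getD r 0 := by
  induction n generalizing p q with
  | zero => simp at hq
  | succ n ih =>
    have h1 : 1 ≤ 2 ^ n := Nat.one_le_two_pow
    set L := (BSP n).length with hL
    have hLval : L = 2 ^ n - 1 := BSP_length n
    have hlen : (BSP (n+1)).length = 2 * L + 1 := by
      simp [BSP, hLval]; omega
    have hqlen : q < (BSP (n+1)).length := by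
      rw [hlen, hLval]; rw [pow_succ] at hq; omega
    have hplen : p < (BSP (n+1)).length := lt_trans hpq hqlen
    -- unfold getD
    rw [BSP_getD_eq _ _ hplen] at hp'
    rw [BSP_getD_eq _ _ hqlen] at hq'
    have getElem_eq : ∀ k (hk : k < (BSP (n+1)).length),
        (BSP (n+1))[k] =
          if hk' : k < L then (BSP n)[k]
          else if k = L then n + 1
          else (BSP n)[k - (L+1)]'(by rw [hlen] at hk; omega) := by
      intro k hk
      show (BSP n ++ [n+1] ++ BSP n)[k]'(by simpa [BSP] using hk) = _
      by_cases hk1 : k < L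
      · rw [List.getElem_append_left (by simp <;> omega),
          List.getElem_append_left (by omega)]
        simp [hk1]
      · by_cases hk2 : k = L
        · subst hk2
          rw [List.getElem_append_left (by simp <;> omega),
            List.getElem_append_right (by omega)]
          simp [hk1]
        · rw [List.getElem_append_right (by simp <;> omega)]
          simp [hk1, hk2]
          rfl
    have hmem : ∀ k (hk : k < L), (BSP n)[k] ≤ n := fun k hk =>
      BSP_le n _ (List.getElem_mem _)
    rw [getElem_eq p hplen] at hp'
    rw [getElem_eq q hqlen] at hq'
    by_cases hp1 : p < L
    · by_cases hq1 : q < L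
      · -- both left
        simp [hp1] at hp'
        simp [hq1] at hq'
        obtain ⟨r, hr1, hr2, hr3⟩ := ih p q hpq (hLval ▸ hq1)
          (by rw [BSP_getD_eq _ _ (by omega)]; exact hp')
          (by rw [BSP_getD_eq _ _ hq1]; exact hq')
        have hrL : r < L := by omega
        refine ⟨r, hr1, hr2, ?_⟩
        rw [BSP_getD_eq _ _ (by omega), getElem_eq r (by omega)]
        simp [hrL]
        rwa [BSP_getD_eq _ _ hrL] at hr3
      · by_cases hq2 : q = L
        · -- q is the middle: i = n+1 but i = element of BSP n ≤ n, contradiction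
          simp [hq1, hq2] at hq'
          simp [hp1] at hp'
          have := hmem p hp1
          omega
        · -- p left, q right: take r = L
          simp [hp1] at hp'
          have : i ≤ n := hp' ▸ hmem p hp1
          refine ⟨L, hp1, by omega, ?_⟩
          rw [BSP_getD_eq _ _ (by omega), getElem_eq L (by omega)]
          simp; omega
    · by_cases hp2 : p = L
      · -- p is middle: i = n+1, q in right copy ≤ n, contradiction
        simp [hp1, hp2] at hp'
        have hq1 : ¬ q < L := by omega
        have hq2 : q ≠ L := by omega
        simp [hq1, hq2] at hq'
        have := hmem (q - (L+1)) (by rw [hlen] at hqlen; omega)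
        omega
      · -- both right
        have hq1 : ¬ q < L := by omega
        have hq2 : q ≠ L := by omega
        simp [hp1, hp2] at hp'
        simp [hq1, hq2] at hq'
        have hq3 : q - (L+1) < L := by rw [hlen] at hqlen; omega
        obtain ⟨r, hr1, hr2, hr3⟩ := ih (p - (L+1)) (q - (L+1)) (by omega)
          (hLval ▸ hq3)
          (by rw [BSP_getD_eq _ _ (by omega)]; exact hp')
          (by rw [BSP_getD_eq _ _ hq3]; exact hq')
        refine ⟨r + (L+1), by omega, by omega, ?_⟩
        have hrlen : r + (L+1) < (BSP (n+1)).length := by rw [hlen]; omega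
        rw [BSP_getD_eq _ _ hrlen, getElem_eq _ hrlen]
        have : ¬ r + (L+1) < L := by omega
        have h2 : r + (L+1) ≠ L := by omega
        simp [this, h2]
        rw [BSP_getD_eq _ _ (by omega : r < L)] at hr3
        convert hr3 using 2 <;> omega
end

section
/- For every n : ℕ, every list w : List α of length 2^n, and every address β < 2^n, the access-pattern word AP(n, β, w[β]) is a sublist (subsequence) of the shuffle word S(n, w). -/
def Shuffle {α : Type*} : ℕ → List α → List (α ⊕ ℕ)
  | 0, w => w.map Sum.inl
  | n+1, w => Shuffle n (w.take (2 ^ n)) ++ [Sum.inr (n + 1)] ++ Shuffle n (w.drop (2 ^ n))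

def AP {α : Type*} : ℕ → ℕ → α → List (α ⊕ ℕ)
  | 0, _, d => [Sum.inl d]
  | n+1, β, d =>
    if 2 ^ n ≤ β then Sum.inr (n + 1) :: AP n (β - 2 ^ n) d
    else AP n β d ++ [Sum.inr (n + 1)]

theorem ap_sublist_shuffle {α : Type*} (n β : ℕ) (w : List α)
    (hw : w.length = 2 ^ n) (hβ : β < 2 ^ n) (hβw : β < w.length) :
    List.Sublist (AP n β (w.get ⟨β, hβw⟩)) (Shuffle n w) := by
  induction n generalizing β w with
  | zero =>
    interval_cases β
    simp [AP, Shuffle]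
  | succ n ih =>
    simp only [AP, Shuffle]
    by_cases h : 2 ^ n ≤ β
    · rw [if_pos h]
      have hlen : (w.drop (2 ^ n)).length = 2 ^ n := by
        simp [hw, pow_succ]; ring_nf; omega
      have hβ' : β - 2 ^ n < 2 ^ n := by
        have : 2 ^ (n+1) = 2 ^ n + 2 ^ n := by ring
        omega
      have hβw' : β - 2 ^ n < (w.drop (2 ^ n)).length := by omega
      have hget : w.get ⟨β, hβw⟩ = (w.drop (2 ^ n)).get ⟨β - 2 ^ n, hβw'⟩ := by
        simp [List.getElem_drop]
        congr 1
        omega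
      rw [hget]
      have := ih (β - 2 ^ n) (w.drop (2 ^ n)) hlen hβ' hβw'
      have step1 : List.Sublist (Sum.inr (n+1) :: AP n (β - 2 ^ n) ((w.drop (2 ^ n)).get ⟨β - 2 ^ n, hβw'⟩)) (Sum.inr (n+1) :: Shuffle n (w.drop (2 ^ n))) := this.cons₂ _
      have step2 : List.Sublist (Sum.inr (n+1) :: Shuffle n (w.drop (2 ^ n))) (Shuffle n (w.take (2 ^ n)) ++ [Sum.inr (n + 1)] ++ Shuffle n (w.drop (2 ^ n))) := by
        rw [List.append_assoc]
        exact List.sublist_append_right _ _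
      exact step1.trans step2
    · rw [if_neg h]
      push_neg at h
      have hlen : (w.take (2 ^ n)).length = 2 ^ n := by
        simp [hw]
        have : 2 ^ (n+1) = 2 ^ n + 2 ^ n := by ring
        omega
      have hβw' : β < (w.take (2 ^ n)).length := by omega
      have hget : w.get ⟨β, hβw⟩ = (w.take (2 ^ n)).get ⟨β, hβw'⟩ := by
        simp [List.getElem_take]
      rw [hget]
      have := ih β (w.take (2 ^ n)) hlen h hβw'
      rw [List.append_assoc]
      exact this.append (by simp)
end

section
/- For every n : ℕ, every list w : List α of length 2^n, every address β < 2^n, and every d : α, if the access-pattern word AP(n, β, d) is a sublist of S(n, w), then d = w[β]. In other words, the access pattern for address β can be read off the shuffle word only with the value actually stored at address β. -/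
lemma shuffle_inr_le {α : Type*} (n : ℕ) (w : List α) (m : ℕ)
    (h : Sum.inr m ∈ Shuffle n w) : m ≤ n := by
  induction n generalizing w with
  | zero => simp [Shuffle] at h
  | succ n ih =>
    rw [Shuffle] at h
    simp only [List.mem_append, List.mem_singleton] at h
    rcases h with (h | h) | h
    · exact (ih _ h).trans (Nat.le_succ n)
    · simp at h; omega
    · exact (ih _ h).trans (Nat.le_succ n)

lemma sublist_cons_mid {γ : Type*} {a : γ} {l l₁ l₂ : List γ} (ha : a ∉ l₁)
    (h : List.Sublist (a :: l) (l₁ ++ a :: l₂)) : List.Sublist l l₂ := by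
  induction l₁ with
  | nil =>
    simp only [List.nil_append] at h
    cases h with
    | cons _ h' => exact (List.sublist_cons_self a l).trans h'
    | cons_cons _ h' => exact h'
  | cons b l₁ ih =>
    simp only [List.mem_cons, not_or] at ha
    cases h with
    | cons _ h' => exact ih ha.2 h'
    | cons_cons _ h' => exact absurd rfl ha.1

lemma sublist_concat_mid {γ : Type*} {a : γ} {l l₁ l₂ : List γ} (ha : a ∉ l₂)
    (h : List.Sublist (l ++ [a]) (l₁ ++ a :: l₂)) : List.Sublist l l₁ := by
  have h' := h.reverse
  simp only [List.reverse_append, List.reverse_cons, List.reverse_singleton,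
    List.singleton_append, List.append_assoc] at h'
  have ha' : a ∉ l₂.reverse := by simpa using ha
  have := sublist_cons_mid ha' h'
  simpa using this.reverse

theorem ap_sublist_unique {α : Type*} (n β : ℕ) (w : List α) (d : α)
    (hw : w.length = 2 ^ n) (hβ : β < 2 ^ n) (hβw : β < w.length)
    (hsub : List.Sublist (AP n β d) (Shuffle n w)) :
    d = w.get ⟨β, hβw⟩ := by
  induction n generalizing β w with
  | zero =>
    interval_cases β
    simp [Shuffle] at hsub
    match w, hw with
    | [a], _ =>
      simp [AP] at hsub
      simpa using hsub
  | succ n ih =>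
    have hnin : (Sum.inr (n + 1) : α ⊕ ℕ) ∉ Shuffle n (w.take (2 ^ n)) :=
      fun h => by have := shuffle_inr_le n _ _ h; omega
    have hnin' : (Sum.inr (n + 1) : α ⊕ ℕ) ∉ Shuffle n (w.drop (2 ^ n)) :=
      fun h => by have := shuffle_inr_le n _ _ h; omega
    rw [Shuffle] at hsub
    rw [AP] at hsub
    by_cases hb : 2 ^ n ≤ β
    · rw [if_pos hb] at hsub
      rw [List.append_assoc] at hsub
      have hsub' := sublist_cons_mid hnin hsub
      have hwl : (w.drop (2 ^ n)).length = 2 ^ n := by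
        simp [hw]; ring_nf; omega
      have hβ' : β - 2 ^ n < 2 ^ n := by
        have := hβ; omega
      have hβw' : β - 2 ^ n < (w.drop (2 ^ n)).length := by omega
      have := ih (β - 2 ^ n) (w.drop (2 ^ n)) hwl hβ' hβw' hsub'
      rw [this]
      simp only [List.get_eq_getElem, List.getElem_drop]
      congr 1
      omega
    · rw [if_neg hb] at hsub
      rw [List.append_assoc] at hsub
      have hsub' := sublist_concat_mid hnin' hsub
      push_neg at hb
      have hwl : (w.take (2 ^ n)).length = 2 ^ n := by
        rw [List.length_take, hw]
        have : 2 ^ n ≤ 2 ^ (n + 1) := Nat.pow_le_pow_right (by norm_num) (by omega)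
        omega
      have hβw' : β < (w.take (2 ^ n)).length := by omega
      have := ih β (w.take (2 ^ n)) hwl hb hβw' hsub'
      rw [this]
      simp [List.getElem_take]
end
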